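/- arXiv:1309.3948 — 2 statements merged into one kernel-verified Lean document; each statement's English description precedes it below -/
import Mathlib

section
/- Let p : Y → X be a proper holomorphic surjective submersion of complex manifolds with X connected and with connected fibers, and let F : Y → Y be holomorphic. Then the set S = {x ∈ X : there exists x' ∈ X with F(p⁻¹{x}) ⊆ p⁻¹{x'}} is open in X. -/
open scoped Manifold
open Function Set

open Metric Complex

private lemma dirderiv_continuousAt {k : ℕ} {F : Type*} [NormedAddCommGroup F]
    [NormedSpace ℂ F] [CompleteSpace F]
    {U : Set (EuclideanSpace ℂ (Fin k))} (hU : IsOpen U)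
    {f : EuclideanSpace ℂ (Fin k) → F} (hf : DifferentiableOn ℂ f U)
    (v : EuclideanSpace ℂ (Fin k)) (hv : ‖v‖ ≤ 1) {a : EuclideanSpace ℂ (Fin k)}
    (ha : a ∈ U) : ContinuousAt (fun z => fderiv ℂ f z v) a := by
  obtain ⟨ε, hε, hball⟩ := Metric.isOpen_iff.1 hU a ha
  set ρ := ε / 4 with hρdef
  have hρ : 0 < ρ := by positivity
  have hsub : ∀ z ∈ ball a ρ, ∀ t : ℂ, ‖t‖ ≤ ρ → z + t • v ∈ U := by
    intro z hz t ht
    apply hball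
    have : ‖z + t • v - a‖ ≤ ‖z - a‖ + ‖t • v‖ := by
      simpa [add_sub_right_comm] using norm_add_le (z - a) (t • v)
    have h1 : ‖t • v‖ ≤ ρ := by
      rw [norm_smul]
      calc ‖t‖ * ‖v‖ ≤ ρ * 1 := by
            exact mul_le_mul ht hv (norm_nonneg _) hρ.le
        _ = ρ := mul_one ρ
    have hz' : ‖z - a‖ < ρ := by rwa [mem_ball, dist_eq_norm] at hz
    rw [mem_ball, dist_eq_norm]
    calc ‖z + t • v - a‖ ≤ ‖z - a‖ + ‖t • v‖ := this
      _ < ρ + ρ := by linarith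
      _ < ε := by rw [hρdef]; linarith
  -- representation by cderiv
  have hrep : ∀ z ∈ ball a ρ,
      fderiv ℂ f z v = cderiv ρ (fun t : ℂ => f (z + t • v)) 0 := by
    intro z hz
    have hzU : z ∈ U := by simpa using hsub z hz 0 (by simp [hρ.le])
    have hlin : ∀ t : ℂ, HasDerivAt (fun s : ℂ => z + s • v) v t := by
      intro t
      simpa using ((hasDerivAt_id t).smul_const v).const_add z
    have hdiff : DifferentiableOn ℂ (fun t : ℂ => f (z + t • v))
        ((fun t : ℂ => z + t • v) ⁻¹' U) := by
      intro t ht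
      exact ((hf.differentiableAt (hU.mem_nhds ht)).comp t
        (hlin t).differentiableAt).differentiableWithinAt
    have hUz : IsOpen ((fun t : ℂ => z + t • v) ⁻¹' U) :=
      hU.preimage (by continuity)
    have hcb : closedBall (0 : ℂ) ρ ⊆ (fun t : ℂ => z + t • v) ⁻¹' U := by
      intro t ht
      exact hsub z hz t (by simpa [dist_eq_norm] using ht)
    rw [Complex.cderiv_eq_deriv hUz hdiff hρ hcb]
    have h0 : HasDerivAt (fun t : ℂ => f (z + t • v)) (fderiv ℂ f z v) 0 := by
      have hz0 : z = z + (0:ℂ) • v := by simp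
      have hfd : HasFDerivAt f (fderiv ℂ f z) (z + (0:ℂ) • v) := by
        rw [← hz0]; exact (hf.differentiableAt (hU.mem_nhds hzU)).hasFDerivAt
      have := hfd.comp_hasDerivAt 0 (hlin 0)
      simpa [Function.comp_def] using this
    exact (h0.deriv).symm
  -- continuity via uniform continuity
  rw [Metric.continuousAt_iff]
  intro ε' hε'
  have hC : IsCompact (closedBall a (2 * ρ)) := isCompact_closedBall _ _
  have hCU : closedBall a (2 * ρ) ⊆ U := by
    intro w hw
    apply hball
    rw [mem_closedBall] at hw
    rw [mem_ball]
    calc dist w a ≤ 2 * ρ := hw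
      _ < ε := by rw [hρdef]; linarith
  have hunif := hC.uniformContinuousOn_of_continuous (hf.continuousOn.mono hCU)
  rw [Metric.uniformContinuousOn_iff] at hunif
  obtain ⟨δ, hδ, hδ'⟩ := hunif (ε' * ρ / 2) (by positivity)
  refine ⟨min δ ρ, by positivity, fun {z} hz => ?_⟩
  have hzρ : z ∈ ball a ρ := by
    rw [mem_ball]; exact lt_of_lt_of_le hz (min_le_right _ _)
  have haρ : a ∈ ball a ρ := mem_ball_self hρ
  rw [dist_eq_norm, hrep z hzρ, hrep a haρ]
  have hmem : ∀ t : ℂ, t ∈ sphere (0 : ℂ) ρ → ∀ w ∈ ball a ρ,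
      w + t • v ∈ closedBall a (2 * ρ) := by
    intro t ht w hw
    rw [mem_sphere, dist_eq_norm, sub_zero] at ht
    rw [mem_closedBall, dist_eq_norm]
    have h1 : ‖t • v‖ ≤ ρ := by
      rw [norm_smul, ht]
      calc ρ * ‖v‖ ≤ ρ * 1 := by exact mul_le_mul_of_nonneg_left hv hρ.le
        _ = ρ := mul_one ρ
    have hw' : ‖w - a‖ < ρ := by rwa [mem_ball, dist_eq_norm] at hw
    calc ‖w + t • v - a‖ ≤ ‖w - a‖ + ‖t • v‖ := by
          simpa [add_sub_right_comm] using norm_add_le (w - a) (t • v)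
      _ ≤ 2 * ρ := by linarith
  have hcont : ∀ w ∈ ball a ρ, ContinuousOn (fun t : ℂ => f (w + t • v))
      (sphere (0 : ℂ) ρ) := by
    intro w hw
    apply (hf.continuousOn.mono hCU).comp
      (Continuous.continuousOn (by fun_prop))
    intro t ht
    exact hmem t ht w hw
  have hlt : ∀ t ∈ sphere (0 : ℂ) ρ,
      ‖f (z + t • v) - f (a + t • v)‖ < ε' * ρ := by
    intro t ht
    have h1 := hδ' (z + t • v) (hmem t ht z hzρ) (a + t • v) (hmem t ht a haρ)
      (by simpa [dist_add_right] using lt_of_lt_of_le hz (min_le_left _ _))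
    rw [dist_eq_norm] at h1
    have h2 : 0 < ε' * ρ := mul_pos hε' hρ
    calc ‖f (z + t • v) - f (a + t • v)‖ < ε' * ρ / 2 := h1
      _ < ε' * ρ := by linarith
  have := Complex.norm_cderiv_sub_lt hρ hlt (hcont z hzρ) (hcont a haρ)
  calc ‖cderiv ρ (fun t : ℂ => f (z + t • v)) 0 - cderiv ρ (fun t : ℂ => f (a + t • v)) 0‖
      < ε' * ρ / ρ := this
    _ = ε' := by field_simp

private lemma contDiffOn_one_of_differentiableOn {k : ℕ} {F : Type*} [NormedAddCommGroup F]
    [NormedSpace ℂ F] [CompleteSpace F]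
    {U : Set (EuclideanSpace ℂ (Fin k))} (hU : IsOpen U)
    {f : EuclideanSpace ℂ (Fin k) → F} (hf : DifferentiableOn ℂ f U) :
    ContDiffOn ℂ 1 f U := by
  have hcont : ContinuousOn (fderiv ℂ f) U := by
    have hrepr : ∀ z ∈ U, fderiv ℂ f z =
        ∑ i : Fin k, (EuclideanSpace.proj i).smulRight
          (fderiv ℂ f z (EuclideanSpace.single i 1)) := by
      intro z hz
      apply ContinuousLinearMap.ext
      intro w
      have hw : ∑ i : Fin k, w i • EuclideanSpace.single i (1 : ℂ) = w := by
        simpa [EuclideanSpace.basisFun_apply, EuclideanSpace.basisFun_repr]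
          using (EuclideanSpace.basisFun (Fin k) ℂ).sum_repr w
      conv_lhs => rw [← hw]
      rw [map_sum]
      simp [ContinuousLinearMap.smulRight_apply]
    apply ContinuousOn.congr ?_ hrepr
    apply continuousOn_finset_sum
    intro i _
    have h1 : ContinuousOn (fun z => fderiv ℂ f z (EuclideanSpace.single i 1)) U := by
      intro z hz
      exact (dirderiv_continuousAt hU hf (EuclideanSpace.single i 1)
        (by simp) hz).continuousWithinAt
    exact (ContinuousLinearMap.smulRightL ℂ (EuclideanSpace ℂ (Fin k)) F
      (EuclideanSpace.proj i)).continuous.comp_continuousOn h1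
  have : (1 : WithTop ℕ∞) = 0 + 1 := by norm_num
  rw [this, contDiffOn_succ_iff_fderiv_of_isOpen hU]
  exact ⟨hf, by simp, contDiffOn_zero.mpr hcont⟩



private lemma fiber_norm_const {Y : Type*} [TopologicalSpace Y] {F' : Type*}
    [NormedAddCommGroup F'] [NormedSpace ℂ F'] {k : ℕ}
    {K : Set Y} (hKc : IsPreconnected K)
    {g : Y → F'} (hg : ContinuousOn g K)
    (hslice : ∀ y ∈ K, ∃ r > 0, ∃ φ : EuclideanSpace ℂ (Fin k) → Y,
      φ 0 = y ∧ MapsTo φ (ball 0 r) K ∧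
      DifferentiableOn ℂ (fun w => g (φ w)) (ball 0 r) ∧
      φ '' (ball 0 r) ∈ nhdsWithin y K)
    {c : Y} (hc : c ∈ K) (hmax : IsMaxOn (norm ∘ g) K c) :
    ∀ z ∈ K, ‖g z‖ = ‖g c‖ := by
  haveI : PreconnectedSpace K := Subtype.preconnectedSpace hKc
  set V : Set K := {z : K | ‖g ↑z‖ = ‖g c‖} with hV
  have hVclosed : IsClosed V := by
    have : Continuous fun z : K => ‖g ↑z‖ :=
      continuous_norm.comp (continuousOn_iff_continuous_restrict.1 hg)
    exact isClosed_eq this continuous_const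
  have hVopen : IsOpen V := by
    rw [isOpen_iff_mem_nhds]
    rintro z hzV
    obtain ⟨r, hr, φ, hφ0, hφK, hφdiff, hφnhds⟩ := hslice ↑z z.2
    have hmaxball : IsMaxOn (norm ∘ fun w => g (φ w)) (ball (0 : EuclideanSpace ℂ (Fin k)) r) 0 := by
      intro w hw
      have h1 : ‖g (φ w)‖ ≤ ‖g c‖ := hmax (hφK hw)
      have h2 : ‖g (φ 0)‖ = ‖g c‖ := by rw [hφ0]; exact hzV
      simpa [h2] using h1
    have heq := Complex.norm_eqOn_of_isPreconnected_of_isMaxOn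
      (convex_ball (0 : EuclideanSpace ℂ (Fin k)) r).isPreconnected isOpen_ball hφdiff
      (mem_ball_self hr) hmaxball
    obtain ⟨O, hOopen, hzO, hOK⟩ := mem_nhdsWithin.1 hφnhds
    have hsub : (Subtype.val : K → Y) ⁻¹' O ⊆ V := by
      rintro z' hz'
      obtain ⟨w, hw, hφw⟩ := hOK ⟨hz', z'.2⟩
      have := heq hw
      simp only [Function.comp, Function.const] at this
      have h2 : ‖g (φ 0)‖ = ‖g c‖ := by rw [hφ0]; exact hzV
      show ‖g ↑z'‖ = ‖g c‖
      rw [← hφw, this, h2]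
    exact Filter.mem_of_superset
      ((hOopen.preimage continuous_subtype_val).mem_nhds hzO) hsub
  have hVne : V.Nonempty := ⟨⟨c, hc⟩, rfl⟩
  have := (IsClopen.eq_univ ⟨hVclosed, hVopen⟩ hVne : V = univ)
  intro z hz
  have : (⟨z, hz⟩ : K) ∈ V := this ▸ mem_univ _
  exact this

private lemma fiber_const {Y : Type*} [TopologicalSpace Y] {F' : Type*}
    [NormedAddCommGroup F'] [NormedSpace ℂ F'] [StrictConvexSpace ℝ F'] {k : ℕ}
    {K : Set Y} (hK : IsCompact K) (hKc : IsPreconnected K)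
    {g : Y → F'} (hg : ContinuousOn g K)
    (hslice : ∀ y ∈ K, ∃ r > 0, ∃ φ : EuclideanSpace ℂ (Fin k) → Y,
      φ 0 = y ∧ MapsTo φ (ball 0 r) K ∧
      DifferentiableOn ℂ (fun w => g (φ w)) (ball 0 r) ∧
      φ '' (ball 0 r) ∈ nhdsWithin y K) :
    ∀ y ∈ K, ∀ z ∈ K, g y = g z := by
  intro y hy z hz
  obtain ⟨c, hc, hmax⟩ := hK.exists_isMaxOn ⟨y, hy⟩ hg.norm
  have h1 := fiber_norm_const hKc hg hslice hc hmax
  set g2 : Y → F' := fun t => g t + g c with hg2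
  have hg2c : ContinuousOn g2 K := hg.add continuousOn_const
  have hslice2 : ∀ y ∈ K, ∃ r > 0, ∃ φ : EuclideanSpace ℂ (Fin k) → Y,
      φ 0 = y ∧ MapsTo φ (ball 0 r) K ∧
      DifferentiableOn ℂ (fun w => g2 (φ w)) (ball 0 r) ∧
      φ '' (ball 0 r) ∈ nhdsWithin y K := by
    intro y' hy'
    obtain ⟨r, hr, φ, hφ0, hφK, hφdiff, hφnhds⟩ := hslice y' hy'
    exact ⟨r, hr, φ, hφ0, hφK, hφdiff.add_const _, hφnhds⟩
  have hmax2 : IsMaxOn (norm ∘ g2) K c := hmax.norm_add_self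
  have h2 := fiber_norm_const hKc hg2c hslice2 hc hmax2
  have key : ∀ t ∈ K, g t = g c := by
    intro t ht
    refine eq_of_norm_eq_of_norm_add_eq (h1 t ht) ?_
    have := h2 t ht
    simp only [hg2] at this
    rw [this, SameRay.rfl.norm_add, h1 t ht]
  rw [key y hy, key z hz]

set_option maxHeartbeats 1000000 in
private lemma slice_exists {k d : ℕ} {Y X : Type*} [TopologicalSpace Y] [TopologicalSpace X]
    [ChartedSpace (EuclideanSpace ℂ (Fin k)) Y]
    [IsManifold 𝓘(ℂ, EuclideanSpace ℂ (Fin k)) ((⊤ : ℕ∞) : WithTop ℕ∞) Y]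
    [ChartedSpace (EuclideanSpace ℂ (Fin d)) X]
    [IsManifold 𝓘(ℂ, EuclideanSpace ℂ (Fin d)) ((⊤ : ℕ∞) : WithTop ℕ∞) X]
    (p : Y → X)
    (hp : MDifferentiable 𝓘(ℂ, EuclideanSpace ℂ (Fin k)) 𝓘(ℂ, EuclideanSpace ℂ (Fin d)) p)
    (hp_subm : ∀ y : Y, Function.Surjective
      (mfderiv 𝓘(ℂ, EuclideanSpace ℂ (Fin k)) 𝓘(ℂ, EuclideanSpace ℂ (Fin d)) p y))
    (y : Y) :
    ∃ r > 0, ∃ φ : EuclideanSpace ℂ (Fin k) → Y,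
      φ 0 = y ∧ MapsTo φ (ball 0 r) (p ⁻¹' {p y}) ∧
      MDifferentiableOn 𝓘(ℂ, EuclideanSpace ℂ (Fin k)) 𝓘(ℂ, EuclideanSpace ℂ (Fin k)) φ
        (ball 0 r) ∧
      φ '' (ball 0 r) ∈ nhdsWithin y (p ⁻¹' {p y}) := by
  set E := EuclideanSpace ℂ (Fin k)
  set D := EuclideanSpace ℂ (Fin d)
  set x := p y with hx
  set c := extChartAt 𝓘(ℂ, E) y with hc
  set e := extChartAt 𝓘(ℂ, D) x with he
  set a := c y with hadef
  have hysrc : y ∈ c.source := mem_extChartAt_source y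
  have hxsrc : x ∈ e.source := mem_extChartAt_source x
  have hatgt : a ∈ c.target := c.map_source hysrc
  have hcsa : c.symm a = y := c.left_inv hysrc
  set U₀ : Set E := c.target ∩ (fun u => p (c.symm u)) ⁻¹' e.source with hU₀def
  have hU₀open : IsOpen U₀ := by
    apply ContinuousOn.isOpen_inter_preimage ?_ (isOpen_extChartAt_target y)
      (isOpen_extChartAt_source x)
    exact hp.continuous.comp_continuousOn (continuousOn_extChartAt_symm y)
  have hU₀tgt : U₀ ⊆ c.target := inter_subset_left
  set P : E → D := fun u => e (p (c.symm u)) with hP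
  have haU₀ : a ∈ U₀ := by
    refine ⟨hatgt, ?_⟩
    show p (c.symm a) ∈ e.source
    rw [hcsa]; exact hxsrc
  have hPdiff : DifferentiableOn ℂ P U₀ := by
    intro u hu
    have hy' : c.symm u ∈ (chartAt E y).source := by
      rw [← extChartAt_source 𝓘(ℂ, E)]; exact c.map_target (hU₀tgt hu)
    have hpy' : p (c.symm u) ∈ (chartAt D x).source := by
      rw [← extChartAt_source 𝓘(ℂ, D)]; exact hu.2
    have h1 := (mdifferentiableAt_iff_of_mem_source (I := 𝓘(ℂ, E)) (I' := 𝓘(ℂ, D))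
      (x := y) (y := x) hy' hpy').1 (hp (c.symm u))
    have h2 := h1.2
    rw [ModelWithCorners.range_eq_univ, differentiableWithinAt_univ] at h2
    have h3 : c ((extChartAt 𝓘(ℂ, E) y).symm u) = u := c.right_inv (hU₀tgt hu)
    have h4 : DifferentiableAt ℂ (↑e ∘ p ∘ ↑c.symm) u := by
      rw [← h3]; exact h2
    exact h4.differentiableWithinAt
  have hPc1 : ContDiffOn ℂ 1 P U₀ := contDiffOn_one_of_differentiableOn hU₀open hPdiff
  set f' := fderiv ℂ P a with hf'
  have hf'surj : Function.Surjective f' := by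
    have h0 := hp_subm y
    have h1 : mfderiv 𝓘(ℂ, E) 𝓘(ℂ, D) p y = fderivWithin ℂ (writtenInExtChartAt 𝓘(ℂ, E)
        𝓘(ℂ, D) y p) (Set.range (𝓘(ℂ, E))) (extChartAt 𝓘(ℂ, E) y y) := (hp y).mfderiv
    rw [h1] at h0
    rw [ModelWithCorners.range_eq_univ, fderivWithin_univ] at h0
    exact h0
  set N := LinearMap.ker (f' : E →ₗ[ℂ] D) with hN
  set π : E →L[ℂ] N := N.orthogonalProjectionOnto with hπ
  have hπcoe : ∀ z : N, π ↑z = z := fun z => Submodule.orthogonalProjectionOnto_mem_subspace_eq_self z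
  set L₀ : E →L[ℂ] D × N := f'.prod π with hL₀
  have hL₀bij : Function.Bijective L₀ := by
    constructor
    · intro u u' huu'
      have hz : L₀ (u - u') = 0 := by rw [map_sub, huu', sub_self]
      have h1 : f' (u - u') = 0 := congrArg Prod.fst hz
      have h2 : π (u - u') = 0 := congrArg Prod.snd hz
      have hmem : u - u' ∈ N := h1
      have : π ((⟨u - u', hmem⟩ : N) : E) = (⟨u - u', hmem⟩ : N) := hπcoe _
      rw [show ((⟨u - u', hmem⟩ : N) : E) = u - u' from rfl, h2] at this
      have : u - u' = 0 := by
        have := congrArg (Subtype.val : N → E) this.symm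
        simpa using this
      exact sub_eq_zero.1 this
    · rintro ⟨v, z⟩
      obtain ⟨x₀, hx₀⟩ := hf'surj v
      refine ⟨↑z + (x₀ - ↑(π x₀)), ?_⟩
      have hzN : (↑z : E) ∈ N := z.2
      have hπx₀N : (↑(π x₀) : E) ∈ N := (π x₀).2
      have hf'z : f' ↑z = 0 := hzN
      have hf'πx₀ : f' ↑(π x₀) = 0 := hπx₀N
      have hfst : f' (↑z + (x₀ - ↑(π x₀))) = v := by
        rw [map_add, map_sub, hf'z, hf'πx₀, hx₀]; abel
      have hsnd : π (↑z + (x₀ - ↑(π x₀))) = z := by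
        rw [map_add, map_sub, hπcoe z, hπcoe (π x₀)]; abel
      exact Prod.ext hfst hsnd
  set eL₀ : E ≃L[ℂ] D × N :=
    (LinearEquiv.ofBijective (L₀ : E →ₗ[ℂ] D × N) hL₀bij).toContinuousLinearEquiv with heL₀
  have heL₀coe : ∀ u, eL₀ u = L₀ u := fun u => rfl
  set Θ : E → D × N := fun u => (P u, π (u - a)) with hΘ
  have hΘstrict : HasStrictFDerivAt Θ (eL₀ : E →L[ℂ] D × N) a := by
    have h1 : HasStrictFDerivAt P f' a :=
      ((hPc1 a haU₀).contDiffAt (hU₀open.mem_nhds haU₀)).hasStrictFDerivAt one_ne_zero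
    have h2 : HasStrictFDerivAt (fun u : E => π (u - a)) π a := by
      have h3 : HasStrictFDerivAt (fun u : E => u - a) (ContinuousLinearMap.id ℂ E) a :=
        (hasStrictFDerivAt_id a).sub_const a
      have h4 := HasStrictFDerivAt.comp (g := ⇑π) a (π.hasStrictFDerivAt) h3
      simpa using h4
    have h5 := HasStrictFDerivAt.prodMk h1 h2
    have h6 : (eL₀ : E →L[ℂ] D × N) = L₀ := ContinuousLinearMap.ext fun u => heL₀coe u
    rw [h6]
    exact h5
  set Φ := hΘstrict.toOpenPartialHomeomorph Θ with hΦ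
  have hΦcoe : ⇑Φ = Θ := hΘstrict.toOpenPartialHomeomorph_coe
  have haΦ : a ∈ Φ.source := hΘstrict.mem_toOpenPartialHomeomorph_source
  set J : (D × N) →L[ℂ] E := (eL₀.symm : (D × N) →L[ℂ] E) with hJ
  set Ξ : E → (E →L[ℂ] E) := fun u => J.comp ((fderiv ℂ P u).prod π) with hΞ
  have hΞcont : ContinuousOn Ξ U₀ := by
    have h1 : ContinuousOn (fderiv ℂ P) U₀ := by
      have h2 : (1 : WithTop ℕ∞) = 0 + 1 := by norm_num
      rw [h2, contDiffOn_succ_iff_fderiv_of_isOpen hU₀open] at hPc1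
      exact hPc1.2.2.continuousOn
    have h3 : Continuous fun L : E →L[ℂ] D => J.comp (L.prod π) := by
      have h4 : Continuous fun L : E →L[ℂ] D =>
          (ContinuousLinearMap.prodₗᵢ (G := N) (F := D) (E := E) (𝕜 := ℂ) ℂ) (L, π) :=
        (ContinuousLinearMap.prodₗᵢ (𝕜 := ℂ) ℂ).continuous.comp
          (continuous_id.prodMk continuous_const)
      exact (ContinuousLinearMap.compL ℂ E (D × N) E J).continuous.comp h4
    exact h3.comp_continuousOn h1
  set G₁ : Set E := U₀ ∩ Ξ ⁻¹' {T : E →L[ℂ] E | IsUnit T} with hG₁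
  have hG₁open : IsOpen G₁ := hΞcont.isOpen_inter_preimage hU₀open Units.isOpen
  have haG₁ : a ∈ G₁ := by
    refine ⟨haU₀, ?_⟩
    have h1 : Ξ a = 1 := by
      apply ContinuousLinearMap.ext
      intro u
      show eL₀.symm ((f'.prod π) u) = u
      have : (f'.prod π) u = eL₀ u := (heL₀coe u).symm
      rw [this, eL₀.symm_apply_apply]
    show IsUnit (Ξ a)
    rw [h1]; exact isUnit_one
  -- invertible derivative of Θ at points of G₁
  have hG₁inv : ∀ u ∈ G₁, ∃ eLu : E ≃L[ℂ] D × N,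
      HasFDerivAt Θ (eLu : E →L[ℂ] D × N) u := by
    intro u hu
    set Lu : E →L[ℂ] D × N := (fderiv ℂ P u).prod π with hLu
    have hunit : IsUnit (Ξ u) := hu.2
    obtain ⟨w, hw⟩ := hunit
    have hbijΞ : Function.Bijective (Ξ u) := by
      have hleft : Function.LeftInverse (↑w⁻¹ : E →L[ℂ] E) (Ξ u) := by
        intro v
        calc (↑w⁻¹ : E →L[ℂ] E) ((Ξ u) v) = ((↑w⁻¹ : E →L[ℂ] E) * (Ξ u)) v := rfl
          _ = v := by rw [← hw, w.inv_mul]; rfl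
      have hright : Function.RightInverse (↑w⁻¹ : E →L[ℂ] E) (Ξ u) := by
        intro v
        calc (Ξ u) ((↑w⁻¹ : E →L[ℂ] E) v) = ((Ξ u) * (↑w⁻¹ : E →L[ℂ] E)) v := rfl
          _ = v := by rw [← hw, w.mul_inv]; rfl
      exact ⟨hleft.injective, hright.surjective⟩
    have hbijLu : Function.Bijective Lu := by
      have hfun : ⇑Lu = ⇑eL₀ ∘ ⇑(Ξ u) := by
        funext v
        show Lu v = eL₀ (eL₀.symm (Lu v))
        rw [eL₀.apply_symm_apply]
      rw [hfun]
      exact eL₀.bijective.comp hbijΞ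
    set eLu : E ≃L[ℂ] D × N :=
      (LinearEquiv.ofBijective (Lu : E →ₗ[ℂ] D × N) hbijLu).toContinuousLinearEquiv with heLu
    have heLucoe : (eLu : E →L[ℂ] D × N) = Lu := ContinuousLinearMap.ext fun _ => rfl
    refine ⟨eLu, ?_⟩
    rw [heLucoe, hLu]
    have h1 : HasFDerivAt P (fderiv ℂ P u) u :=
      (hPdiff.differentiableAt (hU₀open.mem_nhds hu.1)).hasFDerivAt
    have h2 : HasFDerivAt (fun v : E => π (v - a)) (π : E →L[ℂ] N) u := by
      have h3 : HasFDerivAt (fun v : E => v - a) (ContinuousLinearMap.id ℂ E) u :=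
        (hasFDerivAt_id u).sub_const a
      have h4 := HasFDerivAt.comp (g := ⇑π) u (π.hasFDerivAt) h3
      simpa only [ContinuousLinearMap.comp_id, Function.comp_def] using h4
    exact HasFDerivAt.prodMk h1 h2
  -- the target-side neighborhood
  set Ω : Set (D × N) := Φ.target ∩ Φ.symm ⁻¹' G₁ with hΩ
  have hΩopen : IsOpen Ω :=
    Φ.continuousOn_symm.isOpen_inter_preimage Φ.open_target hG₁open
  set b : D × N := Θ a with hb
  have hbΦ : b ∈ Φ.target := by
    have := hΘstrict.image_mem_toOpenPartialHomeomorph_target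
    rwa [← hb] at this
  have hΦsymmb : Φ.symm b = a := by
    have h1 : Φ a = b := by rw [hΦcoe]
    rw [← h1]
    exact Φ.left_inv haΦ
  have hbΩ : b ∈ Ω := ⟨hbΦ, by rw [mem_preimage, hΦsymmb]; exact haG₁⟩
  set ζ : E → D × N := fun w => (P a, π w) with hζ
  have hζcont : Continuous ζ := continuous_const.prodMk π.continuous
  have hζ0 : ζ 0 = b := by
    simp only [hζ, hb, hΘ, map_zero, sub_self]
  obtain ⟨r, hr, hrball⟩ : ∃ r > 0, ball (0 : E) r ⊆ ζ ⁻¹' Ω := by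
    have h1 : ζ ⁻¹' Ω ∈ nhds (0 : E) := by
      apply hζcont.continuousAt.preimage_mem_nhds
      rw [hζ0]
      exact hΩopen.mem_nhds hbΩ
    rcases Metric.mem_nhds_iff.1 h1 with ⟨r, hr, hrb⟩
    exact ⟨r, hr, hrb⟩
  set φ : E → Y := fun w => c.symm (Φ.symm (ζ w)) with hφ
  have hkey : ∀ w ∈ ball (0 : E) r, Φ.symm (ζ w) ∈ G₁ ∧ ζ w ∈ Φ.target := by
    intro w hw
    have h1 := hrball hw
    exact ⟨h1.2, h1.1⟩
  have hφ0 : φ 0 = y := by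
    simp only [hφ, hζ0, hΦsymmb, hcsa]
  have hPfib : ∀ w ∈ ball (0 : E) r, P (Φ.symm (ζ w)) = P a := by
    intro w hw
    obtain ⟨hG, htgt⟩ := hkey w hw
    have h1 : Φ (Φ.symm (ζ w)) = ζ w := Φ.right_inv htgt
    rw [hΦcoe] at h1
    exact congrArg Prod.fst h1
  have hPa : P a = e x := by
    show e (p (c.symm a)) = e x
    rw [hcsa]
  have hφmaps : MapsTo φ (ball (0 : E) r) (p ⁻¹' {p y}) := by
    intro w hw
    obtain ⟨hG, htgt⟩ := hkey w hw
    have hU₀w : Φ.symm (ζ w) ∈ U₀ := hG.1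
    have h1 : P (Φ.symm (ζ w)) = e x := by rw [hPfib w hw, hPa]
    have h2 : p (c.symm (Φ.symm (ζ w))) ∈ e.source := hU₀w.2
    have h3 : e (p (c.symm (Φ.symm (ζ w)))) = e x := h1
    have h4 : p (c.symm (Φ.symm (ζ w))) = x := e.injOn h2 hxsrc h3
    simpa [hφ] using h4
  have hφmdiff : MDifferentiableOn 𝓘(ℂ, E) 𝓘(ℂ, E) φ (ball (0 : E) r) := by
    have hψdiff : DifferentiableOn ℂ (fun w => Φ.symm (ζ w)) (ball (0 : E) r) := by
      intro w hw
      obtain ⟨hG, htgt⟩ := hkey w hw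
      obtain ⟨eLu, heLu⟩ := hG₁inv (Φ.symm (ζ w)) hG
      have h1 : HasFDerivAt (⇑Φ) (eLu : E →L[ℂ] D × N) (Φ.symm (ζ w)) := by
        rw [hΦcoe]; exact heLu
      have h2 : HasFDerivAt (Φ.symm) ((eLu.symm : D × N →L[ℂ] E)) (ζ w) :=
        Φ.hasFDerivAt_symm htgt h1
      have h3 : DifferentiableAt ℂ ζ w :=
        DifferentiableAt.prodMk (differentiableAt_const _) (π.differentiableAt)
      exact (h2.differentiableAt.comp w h3).differentiableWithinAt
    have hψm : MDifferentiableOn 𝓘(ℂ, E) 𝓘(ℂ, E) (fun w => Φ.symm (ζ w))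
        (ball (0 : E) r) := mdifferentiableOn_iff_differentiableOn.2 hψdiff
    have houter : MDifferentiableOn 𝓘(ℂ, E) 𝓘(ℂ, E) c.symm c.target :=
      mdifferentiableOn_extChartAt_symm
    apply houter.comp hψm
    intro w hw
    exact hU₀tgt ((hkey w hw).1).1
  refine ⟨r, hr, φ, hφ0, hφmaps, hφmdiff, ?_⟩
  -- neighborhood within the fiber
  set T : Set E := Φ.source ∩ {u : E | ‖((π (u - a) : N) : E)‖ < r} with hT
  have hTopen : IsOpen T := by
    apply Φ.open_source.inter
    have hcont : Continuous fun u : E => ‖((π (u - a) : N) : E)‖ :=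
      (continuous_subtype_val.comp (π.continuous.comp
        (continuous_id.sub continuous_const))).norm
    exact isOpen_lt hcont continuous_const
  set O : Set Y := c.source ∩ (fun z => c z) ⁻¹' T with hO
  have hOopen : IsOpen O := by
    apply ContinuousOn.isOpen_inter_preimage ?_ (isOpen_extChartAt_source y) hTopen
    exact continuousOn_extChartAt y
  have hyO : y ∈ O := by
    refine ⟨hysrc, ?_⟩
    show c y ∈ T
    refine ⟨haΦ, ?_⟩
    show ‖((π ((c y) - a) : N) : E)‖ < r
    rw [show (c y) - a = 0 by rw [← hadef]; exact sub_self a]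
    rw [map_zero]
    simpa using hr
  rw [mem_nhdsWithin]
  refine ⟨O, hOopen, hyO, ?_⟩
  rintro y' ⟨hy'O, hy'fib⟩
  have hpy' : p y' = x := by simpa using hy'fib
  obtain ⟨hy'src, hy'T⟩ := hy'O
  have hu'T : c y' ∈ T := hy'T
  obtain ⟨hu'Φ, hu'norm⟩ := hu'T
  set u' : E := c y' with hu'
  set w : E := ((π (u' - a) : N) : E) with hwdef
  have hwball : w ∈ ball (0 : E) r := by
    rw [mem_ball, dist_eq_norm, sub_zero]
    exact hu'norm
  have hPu' : P u' = P a := by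
    show e (p (c.symm u')) = P a
    rw [c.left_inv hy'src, hpy', hPa]
  have hζw : ζ w = Θ u' := by
    show (P a, π w) = (P u', π (u' - a))
    rw [hPu']
    exact Prod.ext rfl (by rw [hwdef, hπcoe])
  have hΦsymm : Φ.symm (ζ w) = u' := by
    rw [hζw, ← hΦcoe]
    exact Φ.left_inv hu'Φ
  refine ⟨w, hwball, ?_⟩
  show c.symm (Φ.symm (ζ w)) = y'
  rw [hΦsymm, c.left_inv hy'src]



/-!
STATEMENT 9: Let `p : Y → X` be a proper holomorphic surjective submersion of complex
manifolds with `X` connected and with connected fibers, and let `F : Y → Y` be holomorphic.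
Then the set `S = {x ∈ X : ∃ x', F(p⁻¹{x}) ⊆ p⁻¹{x'}}` is open in `X`.
-/

theorem fiber_preserving_set_isOpen
    {k d : ℕ} {Y X : Type*} [TopologicalSpace Y] [TopologicalSpace X]
    [ChartedSpace (EuclideanSpace ℂ (Fin k)) Y]
    [IsManifold 𝓘(ℂ, EuclideanSpace ℂ (Fin k)) ((⊤ : ℕ∞) : WithTop ℕ∞) Y]
    [ChartedSpace (EuclideanSpace ℂ (Fin d)) X]
    [IsManifold 𝓘(ℂ, EuclideanSpace ℂ (Fin d)) ((⊤ : ℕ∞) : WithTop ℕ∞) X]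
    [ConnectedSpace X]
    (p : Y → X)
    (hp : MDifferentiable 𝓘(ℂ, EuclideanSpace ℂ (Fin k)) 𝓘(ℂ, EuclideanSpace ℂ (Fin d)) p)
    (hp_proper : IsProperMap p)
    (hp_surj : Function.Surjective p)
    -- `p` is a submersion
    (hp_subm : ∀ y : Y, Function.Surjective
      (mfderiv 𝓘(ℂ, EuclideanSpace ℂ (Fin k)) 𝓘(ℂ, EuclideanSpace ℂ (Fin d)) p y))
    -- the fibers of `p` are connected
    (hp_fib : ∀ x : X, IsConnected (p ⁻¹' {x}))
    (F : Y → Y)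
    (hF : MDifferentiable 𝓘(ℂ, EuclideanSpace ℂ (Fin k)) 𝓘(ℂ, EuclideanSpace ℂ (Fin k)) F) :
    IsOpen {x : X | ∃ x' : X, F '' (p ⁻¹' {x}) ⊆ p ⁻¹' {x'}} := by
  classical
  set E := EuclideanSpace ℂ (Fin k)
  set D := EuclideanSpace ℂ (Fin d)
  rw [isOpen_iff_mem_nhds]
  rintro x₀ ⟨x', hx'⟩
  set h : Y → X := fun y => p (F y) with hh
  have hhm : MDifferentiable 𝓘(ℂ, E) 𝓘(ℂ, D) h := hp.comp hF
  have hhc : Continuous h := hp.continuous.comp hF.continuous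
  set W : Set X := (extChartAt 𝓘(ℂ, D) x').source with hW
  have hWopen : IsOpen W := isOpen_extChartAt_source x'
  set V : Set X := (p '' (h ⁻¹' W)ᶜ)ᶜ with hV
  have hVopen : IsOpen V := by
    rw [hV, isOpen_compl_iff]
    exact hp_proper.isClosedMap _ (hWopen.preimage hhc).isClosed_compl
  have hx₀V : x₀ ∈ V := by
    rintro ⟨y, hy, hyx⟩
    apply hy
    have h1 : F y ∈ p ⁻¹' {x'} := hx' ⟨y, by simp [hyx], rfl⟩
    have h2 : h y = x' := by simpa using h1
    show h y ∈ W
    rw [h2]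
    exact mem_extChartAt_source x'
  refine Filter.mem_of_superset (hVopen.mem_nhds hx₀V) ?_
  intro x hxV
  set K : Set Y := p ⁻¹' {x} with hK
  have hKcomp : IsCompact K := hp_proper.isCompact_preimage isCompact_singleton
  have hKfib := hp_fib x
  have hKW : ∀ y ∈ K, h y ∈ W := by
    intro y hy
    by_contra hcon
    exact hxV ⟨y, hcon, hy⟩
  set g : Y → D := fun y => (extChartAt 𝓘(ℂ, D) x') (h y) with hg
  have hgc : ContinuousOn g K := by
    apply (continuousOn_extChartAt x').comp hhc.continuousOn
    intro y hy
    exact hKW y hy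
  have hslice : ∀ y ∈ K, ∃ r > 0, ∃ φ : E → Y,
      φ 0 = y ∧ MapsTo φ (ball 0 r) K ∧
      DifferentiableOn ℂ (fun w => g (φ w)) (ball 0 r) ∧
      φ '' (ball 0 r) ∈ nhdsWithin y K := by
    intro y hy
    have hpy : p y = x := hy
    obtain ⟨r, hr, φ, hφ0, hφmaps, hφmdiff, hφnhds⟩ := slice_exists p hp hp_subm y
    rw [hpy] at hφmaps hφnhds
    refine ⟨r, hr, φ, hφ0, hφmaps, ?_, hφnhds⟩
    have h1 : MDifferentiableOn 𝓘(ℂ, E) 𝓘(ℂ, D) (fun w => h (φ w)) (ball 0 r) :=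
      (hhm.mdifferentiableOn (s := univ)).comp hφmdiff (fun w _ => mem_univ (φ w))
    have h2 : MDifferentiableOn 𝓘(ℂ, D) 𝓘(ℂ, D) (extChartAt 𝓘(ℂ, D) x')
        (chartAt D x').source := mdifferentiableOn_extChartAt
    have h3 : MDifferentiableOn 𝓘(ℂ, E) 𝓘(ℂ, D) (fun w => g (φ w)) (ball 0 r) := by
      apply h2.comp h1
      intro w hw
      show h (φ w) ∈ (chartAt D x').source
      rw [← extChartAt_source 𝓘(ℂ, D)]
      exact hKW (φ w) (hφmaps hw)
    exact mdifferentiableOn_iff_differentiableOn.1 h3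
  have hconst := fiber_const hKcomp hKfib.isPreconnected hgc hslice
  obtain ⟨y₀, hy₀⟩ := hKfib.nonempty
  refine ⟨h y₀, ?_⟩
  rintro _ ⟨y, hy, rfl⟩
  have h1 : g y = g y₀ := hconst y hy y₀ hy₀
  have h2 : h y = h y₀ :=
    (extChartAt 𝓘(ℂ, D) x').injOn (hKW y hy) (hKW y₀ hy₀) h1
  simpa using h2
end

section
/- Let p : Y → X be a proper holomorphic surjective submersion with X connected and with connected fibers, and let F : Y → Y be a holomorphic map such that for some points a, b ∈ X, F maps the fiber Y_a = p⁻¹{a} into the fiber Y_b = p⁻¹{b}. Then F is a map of fiber spaces: there exists a holomorphic map f : X → X with p ∘ F = f ∘ p. -/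
open scoped Manifold
open Function Set

/-!
STATEMENT 11 (Theorem 2(a) of the paper): Let `p : Y → X` be a proper holomorphic surjective
submersion of complex manifolds with `X` connected and with connected fibers, and let
`F : Y → Y` be a holomorphic map that sends the fiber `Y_a = p⁻¹{a}` into the fiber
`Y_b = p⁻¹{b}` for some points `a, b ∈ X`.  Then `F` is a map of fiber spaces: there is a
holomorphic map `f : X → X` with `p ∘ F = f ∘ p`.
-/


section Aux

open Metric Set Function Filter
open scoped Manifold Topology

noncomputable section

variable {E F : Type*} [NormedAddCommGroup E] [NormedSpace ℂ E] [FiniteDimensional ℂ E]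
  [NormedAddCommGroup F] [NormedSpace ℂ F] [CompleteSpace F]

/-- On a finite-dimensional complex space, the Fréchet derivative of a holomorphic
function is continuous. -/
theorem continuousOn_fderiv_of_holomorphic {f : E → F} {U : Set E} (hU : IsOpen U)
    (hf : DifferentiableOn ℂ f U) : ContinuousOn (fderiv ℂ f) U := by
  intro z₀ hz₀
  apply ContinuousAt.continuousWithinAt
  rw [Metric.continuousAt_iff]
  intro ε hε
  obtain ⟨r, hr, hrU⟩ : ∃ r > 0, closedBall z₀ r ⊆ U :=
    (Metric.nhds_basis_closedBall.mem_iff.1 (hU.mem_nhds hz₀))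
  set R : ℝ := r / 3 with hR
  have hR0 : 0 < R := by positivity
  -- uniform continuity on the closed ball
  have hK : IsCompact (closedBall z₀ r) := isCompact_closedBall z₀ r
  have hfc : ContinuousOn f (closedBall z₀ r) := hf.continuousOn.mono hrU
  have hUC := hK.uniformContinuousOn_of_continuous hfc
  rw [Metric.uniformContinuousOn_iff] at hUC
  obtain ⟨δ₀, hδ₀, hδ₀'⟩ := hUC (R * ε / 2) (by positivity)
  refine ⟨min δ₀ R, lt_min hδ₀ hR0, ?_⟩
  intro z₁ hz₁
  have hz₁δ : dist z₁ z₀ < δ₀ := lt_of_lt_of_le hz₁ (min_le_left _ _)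
  have hz₁R : dist z₁ z₀ < R := lt_of_lt_of_le hz₁ (min_le_right _ _)
  have hz₁U : z₁ ∈ U := hrU (by
    simp only [mem_closedBall]
    nlinarith [dist_nonneg (x := z₁) (y := z₀)])
  have hd₁ : DifferentiableAt ℂ f z₁ := hf.differentiableAt (hU.mem_nhds hz₁U)
  have hd₀ : DifferentiableAt ℂ f z₀ := hf.differentiableAt (hU.mem_nhds hz₀)
  have key : ∀ v : E, ‖v‖ = 1 → ‖fderiv ℂ f z₁ v - fderiv ℂ f z₀ v‖ ≤ ε / 2 := by
    intro v hv
    -- the function on the line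
    set q : ℂ → F := fun t => f (z₁ + t • v) - f (z₀ + t • v) with hq
    have hmem : ∀ (z : E), z ∈ ball z₀ R → ∀ t : ℂ, ‖t‖ ≤ R → z + t • v ∈ closedBall z₀ r := by
      intro z hz t ht
      simp only [mem_ball] at hz
      simp only [mem_closedBall, dist_eq_norm]
      have : z + t • v - z₀ = (z - z₀) + t • v := by abel
      rw [this]
      calc ‖(z - z₀) + t • v‖ ≤ ‖z - z₀‖ + ‖t • v‖ := norm_add_le _ _
        _ ≤ R + R := by
            rw [norm_smul, hv, mul_one]
            have := hz
            rw [dist_eq_norm] at this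
            exact add_le_add this.le ht
        _ ≤ r := by rw [hR]; linarith
    have hmem₁ : ∀ t : ℂ, ‖t‖ ≤ R → z₁ + t • v ∈ closedBall z₀ r :=
      hmem z₁ (by simpa [mem_ball] using hz₁R)
    have hmem₀ : ∀ t : ℂ, ‖t‖ ≤ R → z₀ + t • v ∈ closedBall z₀ r :=
      hmem z₀ (by simpa [mem_ball] using hR0)
    have hline : ∀ (z : E), (∀ t : ℂ, ‖t‖ ≤ R → z + t • v ∈ closedBall z₀ r) →
        DifferentiableOn ℂ (fun t : ℂ => f (z + t • v)) (closedBall (0:ℂ) R) := by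
      intro z hz
      refine DifferentiableOn.comp (hf.mono hrU) ?_ ?_
      · exact (differentiable_const z |>.add ((differentiable_id).smul_const v)).differentiableOn
      · intro t ht
        simp only [mem_closedBall, dist_zero_right] at ht
        exact hz t ht
    have hqd : DifferentiableOn ℂ q (closedBall (0:ℂ) R) :=
      (hline z₁ hmem₁).sub (hline z₀ hmem₀)
    have hqcl : DiffContOnCl ℂ q (ball (0:ℂ) R) :=
      hqd.diffContOnCl_ball subset_rfl
    -- derivative of q at 0
    have hder : ∀ (z : E), z ∈ U → DifferentiableAt ℂ f z →
        HasDerivAt (fun t : ℂ => f (z + t • v)) (fderiv ℂ f z v) 0 := by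
      intro z hzU hdz
      have h1 : HasDerivAt (fun t : ℂ => z + t • v) ((1:ℂ) • v) 0 :=
        ((hasDerivAt_id (0:ℂ)).smul_const v).const_add z
      have hdz' : HasFDerivAt f (fderiv ℂ f z) (z + (0:ℂ) • v) := by simpa using hdz.hasFDerivAt
      have h2 := hdz'.comp_hasDerivAt (x := (0:ℂ)) (f := fun t : ℂ => z + t • v) h1
      simpa [Function.comp_def] using h2
    have hq0 : HasDerivAt q (fderiv ℂ f z₁ v - fderiv ℂ f z₀ v) 0 :=
      (hder z₁ hz₁U hd₁).sub (hder z₀ hz₀ hd₀)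
    have hbound : ∀ t ∈ sphere (0:ℂ) R, ‖q t‖ ≤ R * ε / 2 := by
      intro t ht
      simp only [mem_sphere, dist_zero_right] at ht
      have h1 : z₁ + t • v ∈ closedBall z₀ r := hmem₁ t ht.le
      have h2 : z₀ + t • v ∈ closedBall z₀ r := hmem₀ t ht.le
      have hdist : dist (z₁ + t • v) (z₀ + t • v) < δ₀ := by
        simpa [dist_eq_norm, add_sub_add_right_eq_sub, ← dist_eq_norm] using hz₁δ
      have := hδ₀' _ h1 _ h2 hdist
      rw [dist_eq_norm] at this
      exact this.le
    have := Complex.norm_deriv_le_of_forall_mem_sphere_norm_le hR0 hqcl hbound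
    rw [hq0.deriv] at this
    calc ‖fderiv ℂ f z₁ v - fderiv ℂ f z₀ v‖ ≤ (R * ε / 2) / R := this
      _ = ε / 2 := by field_simp
  have hop : ‖fderiv ℂ f z₁ - fderiv ℂ f z₀‖ ≤ ε / 2 := by
    refine ContinuousLinearMap.opNorm_le_bound _ (by positivity) ?_
    intro v
    rcases eq_or_ne v 0 with rfl | hv
    · simp
    · have hnv : ‖v‖ ≠ 0 := norm_ne_zero_iff.2 hv
      have hu : ‖((‖v‖⁻¹ : ℝ) : ℂ) • v‖ = 1 := by
        rw [norm_smul, Complex.norm_real, Real.norm_eq_abs, abs_inv, abs_norm]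
        field_simp
      have hkey := key (((‖v‖⁻¹ : ℝ) : ℂ) • v) hu
      have hveq : v = ((‖v‖ : ℝ) : ℂ) • (((‖v‖⁻¹ : ℝ) : ℂ) • v) := by
        rw [smul_smul, ← Complex.ofReal_mul, mul_inv_cancel₀ hnv]
        simp
      set u := ((‖v‖⁻¹ : ℝ) : ℂ) • v with hudef
      calc ‖(fderiv ℂ f z₁ - fderiv ℂ f z₀) v‖
          = ‖(fderiv ℂ f z₁ - fderiv ℂ f z₀) (((‖v‖ : ℝ) : ℂ) • u)‖ := by rw [← hveq]
        _ = ‖v‖ * ‖(fderiv ℂ f z₁ - fderiv ℂ f z₀) u‖ := by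
            rw [map_smul, norm_smul, Complex.norm_real, Real.norm_eq_abs, abs_norm]
        _ ≤ ‖v‖ * (ε / 2) := by
            refine mul_le_mul_of_nonneg_left ?_ (norm_nonneg v)
            simpa [ContinuousLinearMap.sub_apply] using hkey
        _ = ε / 2 * ‖v‖ := by ring
  rw [dist_eq_norm]
  exact lt_of_le_of_lt hop (by linarith)

theorem contDiffOn_one_of_holomorphic {f : E → F} {U : Set E} (hU : IsOpen U)
    (hf : DifferentiableOn ℂ f U) : ContDiffOn ℂ 1 f U := by
  rw [show (1 : WithTop ℕ∞) = 0 + 1 from rfl, contDiffOn_succ_iff_fderiv_of_isOpen hU]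
  refine ⟨hf, by simp, ?_⟩
  rw [contDiffOn_zero]
  exact continuousOn_fderiv_of_holomorphic hU hf

variable {k d : ℕ} {Y X : Type*} [TopologicalSpace Y] [TopologicalSpace X]
    [ChartedSpace (EuclideanSpace ℂ (Fin k)) Y]
    [IsManifold 𝓘(ℂ, EuclideanSpace ℂ (Fin k)) (⊤ : ℕ∞) Y]
    [ChartedSpace (EuclideanSpace ℂ (Fin d)) X]
    [IsManifold 𝓘(ℂ, EuclideanSpace ℂ (Fin d)) (⊤ : ℕ∞) X]

local notation "Ek" => EuclideanSpace ℂ (Fin k)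
local notation "Ed" => EuclideanSpace ℂ (Fin d)
local notation "MI" => 𝓘(ℂ, EuclideanSpace ℂ (Fin k))
local notation "MJ" => 𝓘(ℂ, EuclideanSpace ℂ (Fin d))

/-- The kernel of the differential of `p` at `y`, as a submodule of the model space. -/
noncomputable def mker (p : Y → X) (y : Y) : Submodule ℂ (EuclideanSpace ℂ (Fin k)) :=
  LinearMap.ker ((show Ek →L[ℂ] Ed from mfderiv MI MJ p y) : Ek →ₗ[ℂ] Ed)

set_option maxHeartbeats 2000000 in
/-- Local normal form ("fibered chart") for a holomorphic submersion at a point `y`. -/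
theorem fibered_chart (p : Y → X) (hp : MDifferentiable MI MJ p) (y : Y)
    (hsub : Function.Surjective (mfderiv MI MJ p y)) :
    ∃ (U : Set X) (r : ℝ)
      (Ψ : X → ↥(mker (k := k) (d := d) p y) → Y),
      IsOpen U ∧ p y ∈ U ∧ 0 < r ∧
      (∀ x' ∈ U, ∀ z ∈ ball (0 : ↥(mker (k := k) (d := d) p y)) r, p (Ψ x' z) = x') ∧
      Ψ (p y) 0 = y ∧
      ContinuousOn (fun q : X × ↥(mker (k := k) (d := d) p y) => Ψ q.1 q.2)
        (U ×ˢ ball 0 r) ∧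
      (∀ x' ∈ U, MDifferentiableOn 𝓘(ℂ, ↥(mker (k := k) (d := d) p y)) MI (Ψ x')
        (ball 0 r)) ∧
      MDifferentiableOn MJ MI (fun x' => Ψ x' 0) U ∧
      (∀ r', 0 < r' → r' ≤ r → ∃ V', IsOpen V' ∧ y ∈ V' ∧
        V' ∩ p ⁻¹' {p y} ⊆ Ψ (p y) '' ball 0 r') := by
  classical
  set x := p y with hx
  set φ := extChartAt MI y with hφ
  set χ := extChartAt MJ x with hχ
  set phat : Ek → Ed := fun ζ => χ (p (φ.symm ζ)) with hphat
  set O₀ : Set Ek := φ.target ∩ φ.symm ⁻¹' (p ⁻¹' χ.source) with hO₀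
  have hO₀open : IsOpen O₀ :=
    (continuousOn_extChartAt_symm y).isOpen_inter_preimage (isOpen_extChartAt_target y)
      ((isOpen_extChartAt_source x).preimage hp.continuous)
  set yh := φ y with hyhdef
  have hφy : φ.symm yh = y := extChartAt_to_inv y
  have hyh : yh ∈ O₀ := by
    refine ⟨mem_extChartAt_target y, ?_⟩
    simp only [mem_preimage, hφy]
    exact mem_extChartAt_source x
  -- differentiability of the chart representative
  have hdiff : DifferentiableOn ℂ phat O₀ := by
    have h := (mdifferentiable_iff.1 hp).2 y x
    exact h
  have hC1 : ContDiffOn ℂ 1 phat O₀ := contDiffOn_one_of_holomorphic hO₀open hdiff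
  set D : Ek →L[ℂ] Ed := mfderiv MI MJ p y with hD
  have hfd : fderiv ℂ phat yh = D := by
    have h0 := (hp y).mfderiv
    rw [ModelWithCorners.range_eq_univ, fderivWithin_univ] at h0
    rw [hD]
    exact h0.symm
  have hdAt : DifferentiableAt ℂ phat yh := hdiff.differentiableAt (hO₀open.mem_nhds hyh)
  have hDf : HasFDerivAt phat D yh := hfd ▸ hdAt.hasFDerivAt
  have hDsub : Function.Surjective D := hsub
  set N := mker (k := k) (d := d) p y with hN
  set π : Ek →L[ℂ] ↥N := N.orthogonalProjectionOnto with hπ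
  have hπmem : ∀ v : ↥N, π (v : Ek) = v := fun v => Submodule.orthogonalProjectionOnto_mem_subspace_eq_self v
  set T : Ek →L[ℂ] Ed × ↥N := D.prod π with hT
  have hTbij : Function.Bijective T := by
    constructor
    · intro ζ₁ ζ₂ h12
      have h1 : D ζ₁ = D ζ₂ := congrArg Prod.fst h12
      have h2 : π ζ₁ = π ζ₂ := congrArg Prod.snd h12
      have hmem : ζ₁ - ζ₂ ∈ N := by
        show ζ₁ - ζ₂ ∈ LinearMap.ker (D : Ek →ₗ[ℂ] Ed)
        rw [LinearMap.mem_ker]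
        simp [map_sub, sub_eq_zero, h1]
      have hself := hπmem ⟨ζ₁ - ζ₂, hmem⟩
      have hval : π (ζ₁ - ζ₂) = 0 := by simp [map_sub, h2]
      have hz0 : (⟨ζ₁ - ζ₂, hmem⟩ : ↥N) = 0 := by
        rw [← hself]
        exact_mod_cast hval
      have := congrArg Subtype.val hz0
      simpa [sub_eq_zero] using this
    · rintro ⟨w, n⟩
      obtain ⟨u, hu⟩ := hDsub w
      refine ⟨u + ((n : Ek) - ((π u : ↥N) : Ek)), ?_⟩
      have hker : (n : Ek) - ((π u : ↥N) : Ek) ∈ N := sub_mem n.2 (π u).2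
      have hD0 : D ((n : Ek) - ((π u : ↥N) : Ek)) = 0 := hker
      ext
      · simp [hT, map_add, hu, hD0]
      · simp only [hT, ContinuousLinearMap.prod_apply, map_add]
        have := hπmem ⟨(n : Ek) - ((π u : ↥N) : Ek), hker⟩
        rw [show ((⟨(n : Ek) - ((π u : ↥N) : Ek), hker⟩ : ↥N) : Ek)
          = (n : Ek) - ((π u : ↥N) : Ek) from rfl] at this
        rw [this]
        simp
  set T' : Ek ≃L[ℂ] Ed × ↥N :=
    LinearEquiv.toContinuousLinearEquiv (LinearEquiv.ofBijective (T : Ek →ₗ[ℂ] Ed × ↥N) hTbij)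
    with hT'
  have hTT' : (T' : Ek →L[ℂ] Ed × ↥N) = T := by ext ζ <;> rfl
  set G : Ek → Ed × ↥N := fun ζ => (phat ζ, π ζ) with hG
  have hGc : ContDiffAt ℂ 1 G yh :=
    (hC1.contDiffAt (hO₀open.mem_nhds hyh)).prodMk (π.contDiff.contDiffAt)
  have hGd : HasFDerivAt G (T' : Ek →L[ℂ] Ed × ↥N) yh := by
    rw [hTT']
    exact hDf.prodMk π.hasFDerivAt
  set Φ := hGc.toOpenPartialHomeomorph G hGd one_ne_zero with hΦ
  have hΦcoe : (Φ : Ek → Ed × ↥N) = G := rfl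
  have hyhΦ : yh ∈ Φ.source := hGc.mem_toOpenPartialHomeomorph_source hGd one_ne_zero
  have hGyhΦ : G yh ∈ Φ.target := hGc.image_mem_toOpenPartialHomeomorph_target hGd one_ne_zero
  have hΦsymmGyh : Φ.symm (G yh) = yh := by
    have := Φ.left_inv hyhΦ
    rwa [hΦcoe] at this
  -- smoothness of the inverse on a neighbourhood
  have hinvAt : ContDiffAt ℂ 1 (Φ.symm : Ed × ↥N → Ek) (G yh) := by
    have h1 := hGc.to_localInverse hGd one_ne_zero
    have h2 : hGc.localInverse hGd one_ne_zero = (Φ.symm : Ed × ↥N → Ek) := by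
      rfl
    rwa [h2] at h1
  obtain ⟨u, hu_open, hGyhu, hu⟩ : ∃ u, IsOpen u ∧ G yh ∈ u ∧
      ∀ z ∈ u, ContDiffAt ℂ 1 (Φ.symm : Ed × ↥N → Ek) z := by
    have h := hinvAt.eventually (by norm_num)
    rcases _root_.eventually_nhds_iff.1 h with ⟨t, ht, ht_open, hmem⟩
    exact ⟨t, ht_open, hmem, fun z hz => ht z hz⟩
  set W₀ : Set (Ed × ↥N) := (Φ.target ∩ Φ.symm ⁻¹' (O₀ ∩ Φ.source)) ∩ u with hW₀
  have hW₀open : IsOpen W₀ :=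
    (Φ.continuousOn_symm.isOpen_inter_preimage Φ.open_target
      (hO₀open.inter Φ.open_source)).inter hu_open
  have hGyhW₀ : G yh ∈ W₀ := by
    refine ⟨⟨hGyhΦ, ?_⟩, hGyhu⟩
    simp only [mem_preimage, hΦsymmGyh]
    exact ⟨hyh, hyhΦ⟩
  have hWsymm : DifferentiableOn ℂ (Φ.symm : Ed × ↥N → Ek) W₀ := fun z hz =>
    ((hu z hz.2).differentiableAt one_ne_zero).differentiableWithinAt
  -- the center of the chart
  have hGyheq : G yh = (χ x, π yh) := by
    simp only [hG]
    congr 1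
    simp only [hphat, hφy, hx]
  set n₀ : ↥N := π yh with hn₀
  obtain ⟨r, hr, hrW₀⟩ : ∃ r > 0, ball (G yh) r ⊆ W₀ :=
    Metric.isOpen_iff.1 hW₀open _ hGyhW₀
  set U : Set X := χ.source ∩ χ ⁻¹' (ball (χ x) r) with hU
  have hUopen : IsOpen U :=
    (continuousOn_extChartAt x).isOpen_inter_preimage (isOpen_extChartAt_source x) isOpen_ball
  have hxU : x ∈ U := ⟨mem_extChartAt_source x, by simp [mem_ball, hr]⟩
  set Ψ : X → ↥N → Y := fun x' z => φ.symm (Φ.symm (χ x', n₀ + z)) with hΨ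
  -- basic membership fact
  have hwmem : ∀ x' ∈ U, ∀ z ∈ ball (0 : ↥N) r, ((χ x', n₀ + z) : Ed × ↥N) ∈ ball (G yh) r := by
    intro x' hx' z hz
    rw [hGyheq, ← ball_prod_same]
    refine ⟨hx'.2, ?_⟩
    simpa [mem_ball, dist_eq_norm] using hz
  have hζprop : ∀ w ∈ ball (G yh) r, Φ.symm w ∈ O₀ ∩ Φ.source ∧ G (Φ.symm w) = w := by
    intro w hw
    have hwW₀ : w ∈ W₀ := hrW₀ hw
    refine ⟨hwW₀.1.2, ?_⟩
    have := Φ.right_inv hwW₀.1.1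
    rwa [hΦcoe] at this
  have hproj : ∀ x' ∈ U, ∀ z ∈ ball (0 : ↥N) r, p (Ψ x' z) = x' := by
    intro x' hx' z hz
    have hw := hwmem x' hx' z hz
    obtain ⟨⟨hζO₀, hζΦ⟩, hGζ⟩ := hζprop _ hw
    set ζ := Φ.symm (χ x', n₀ + z)
    have h1 : phat ζ = χ x' := congrArg Prod.fst hGζ
    have h2 : p (φ.symm ζ) ∈ χ.source := hζO₀.2
    have h3 : χ (p (φ.symm ζ)) = χ x' := h1
    exact χ.injOn h2 hx'.1 h3
  have hΨx0 : Ψ x 0 = y := by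
    simp only [hΨ, add_zero]
    rw [show ((χ x, n₀) : Ed × ↥N) = G yh from hGyheq.symm, hΦsymmGyh, hφy]
  refine ⟨U, r, Ψ, hUopen, hxU, hr, hproj, hΨx0, ?_, ?_, ?_, ?_⟩
  · -- joint continuity
    have step1 : ContinuousOn (fun q : X × ↥N => ((χ q.1, n₀ + q.2) : Ed × ↥N))
        (U ×ˢ ball 0 r) := by
      apply ContinuousOn.prodMk
      · exact (continuousOn_extChartAt x).comp continuousOn_fst
          (fun q hq => (mem_prod.1 hq).1.1)
      · exact (continuous_const.add continuous_snd).continuousOn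
    have m1 : MapsTo (fun q : X × ↥N => ((χ q.1, n₀ + q.2) : Ed × ↥N)) (U ×ˢ ball 0 r)
        Φ.target := fun q hq => (hrW₀ (hwmem _ (mem_prod.1 hq).1 _ (mem_prod.1 hq).2)).1.1
    have step2 : ContinuousOn (fun q : X × ↥N => Φ.symm ((χ q.1, n₀ + q.2) : Ed × ↥N))
        (U ×ˢ ball 0 r) := Φ.continuousOn_symm.comp step1 m1
    have m2 : MapsTo (fun q : X × ↥N => Φ.symm ((χ q.1, n₀ + q.2) : Ed × ↥N)) (U ×ˢ ball 0 r)
        φ.target := fun q hq =>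
      ((hζprop _ (hwmem _ (mem_prod.1 hq).1 _ (mem_prod.1 hq).2)).1.1).1
    exact (continuousOn_extChartAt_symm y).comp step2 m2
  · -- differentiability in the fiber direction
    intro x' hx'
    have haff : DifferentiableOn ℂ (fun z : ↥N => ((χ x', n₀ + z) : Ed × ↥N)) (ball 0 r) :=
      ((differentiable_const _).prodMk ((differentiable_const _).add differentiable_id)).differentiableOn
    have m1 : MapsTo (fun z : ↥N => ((χ x', n₀ + z) : Ed × ↥N)) (ball 0 r) W₀ :=
      fun z hz => hrW₀ (hwmem x' hx' z hz)
    have h1 : DifferentiableOn ℂ (fun z : ↥N => Φ.symm ((χ x', n₀ + z) : Ed × ↥N)) (ball 0 r) :=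
      hWsymm.comp haff m1
    have m2 : MapsTo (fun z : ↥N => Φ.symm ((χ x', n₀ + z) : Ed × ↥N)) (ball 0 r) φ.target :=
      fun z hz => ((hζprop _ (hwmem x' hx' z hz)).1.1).1
    exact (mdifferentiableOn_extChartAt_symm (x := y)).comp (h1.mdifferentiableOn) m2
  · -- differentiability of the section
    have hv1 : DifferentiableOn ℂ (fun w : Ed => Φ.symm ((w, n₀ + 0) : Ed × ↥N))
        (ball (χ x) r) := by
      refine hWsymm.comp
        ((differentiable_id.prodMk (differentiable_const _)).differentiableOn) ?_
      intro w hw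
      apply hrW₀
      rw [hGyheq, ← ball_prod_same]
      exact ⟨hw, by simp [mem_ball, hr]⟩
    have hχm : MDifferentiableOn MJ 𝓘(ℂ, Ed) χ U := by
      apply (mdifferentiableOn_extChartAt (x := x)).mono
      rw [← extChartAt_source (I := MJ)]
      exact inter_subset_left
    have hmid : MDifferentiableOn MJ 𝓘(ℂ, Ek)
        (fun x' : X => Φ.symm ((χ x', n₀ + 0) : Ed × ↥N)) U := by
      refine (hv1.mdifferentiableOn).comp hχm ?_
      intro x' hx'
      exact hx'.2
    have m2 : MapsTo (fun x' : X => Φ.symm ((χ x', n₀ + 0) : Ed × ↥N)) U φ.target := by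
      intro x' hx'
      exact ((hζprop _ (hwmem x' hx' 0 (by simp [mem_ball, hr]))).1.1).1
    exact (mdifferentiableOn_extChartAt_symm (x := y)).comp hmid m2
  · -- covering of a fiber neighbourhood
    intro r' hr' hr'r
    set V' : Set Y := φ.source ∩ φ ⁻¹' ((O₀ ∩ Φ.source) ∩ G ⁻¹' (ball (χ x) r ×ˢ ball n₀ r'))
      with hV'
    have hGcont : ContinuousOn G (O₀ ∩ Φ.source) :=
      ((hdiff.continuousOn.mono inter_subset_left).prodMk
        (π.continuous.continuousOn))
    have hinner : IsOpen ((O₀ ∩ Φ.source) ∩ G ⁻¹' (ball (χ x) r ×ˢ ball n₀ r')) :=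
      hGcont.isOpen_inter_preimage (hO₀open.inter Φ.open_source)
        (isOpen_ball.prod isOpen_ball)
    have hV'open : IsOpen V' :=
      (continuousOn_extChartAt y).isOpen_inter_preimage (isOpen_extChartAt_source y) hinner
    have hyV' : y ∈ V' := by
      refine ⟨mem_extChartAt_source y, ?_⟩
      simp only [mem_preimage]
      refine ⟨⟨hyh, hyhΦ⟩, ?_⟩
      have hGmem : G yh ∈ ball (χ x) r ×ˢ ball n₀ r' := by
        rw [hGyheq]
        exact ⟨by simp [mem_ball, hr], by simp [mem_ball, hr']⟩
      exact hGmem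
    refine ⟨V', hV'open, hyV', ?_⟩
    rintro y' ⟨hy'V, hy'fib⟩
    have hy's : y' ∈ φ.source := hy'V.1
    have hy'2 := hy'V.2
    simp only [mem_preimage] at hy'2
    obtain ⟨⟨hζ'O₀, hζ'Φ⟩, hζ'ball⟩ := hy'2
    set ζ' := φ y' with hζ'def
    have hφsymmζ' : φ.symm ζ' = y' := φ.left_inv hy's
    have hpy' : p y' = x := hy'fib
    have hphatζ' : phat ζ' = χ x := by
      simp only [hphat, hφsymmζ', hpy']
    have hπζ' : π ζ' ∈ ball n₀ r' := hζ'ball.2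
    set z : ↥N := π ζ' - n₀ with hz
    have hzball : z ∈ ball (0 : ↥N) r' := by
      simpa [mem_ball, dist_eq_norm, hz] using hπζ'
    refine ⟨z, hzball, ?_⟩
    have : ((χ x, n₀ + z) : Ed × ↥N) = G ζ' := by
      simp only [hG, hphatζ', hz]
      congr 1
      abel
    simp only [hΨ, this]
    have : Φ.symm (G ζ') = ζ' := by
      have := Φ.left_inv hζ'Φ
      rwa [hΦcoe] at this
    rw [this, hφsymmζ']

/-- Tube lemma for proper maps. -/
theorem proper_tube {Y' X' : Type*} [TopologicalSpace Y'] [TopologicalSpace X']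
    {p : Y' → X'} (h : IsProperMap p) {x₀ : X'} {O : Set Y'} (hO : IsOpen O)
    (hfib : p ⁻¹' {x₀} ⊆ O) : ∃ U, IsOpen U ∧ x₀ ∈ U ∧ p ⁻¹' U ⊆ O := by
  refine ⟨(p '' Oᶜ)ᶜ, (h.isClosedMap _ hO.isClosed_compl).isOpen_compl, ?_, ?_⟩
  · rintro ⟨y, hyO, hpy⟩
    exact hyO (hfib (by simp [hpy]))
  · intro y hy
    by_contra hyO
    exact hy (mem_image_of_mem p hyO)

/-- A holomorphic map is constant on a compact connected fiber of a holomorphic submersion,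
provided its values on that fiber stay inside a single extended chart. -/
theorem const_on_fiber (p : Y → X) (hp : MDifferentiable MI MJ p)
    (hp_subm : ∀ y : Y, Function.Surjective (mfderiv MI MJ p y))
    (g : Y → X) (hg : MDifferentiable MI MJ g) {x' : X}
    (hK : IsCompact (p ⁻¹' {x'})) (hKne : (p ⁻¹' {x'}).Nonempty)
    (hKconn : IsPreconnected (p ⁻¹' {x'}))
    (w : X) (hgK : ∀ y ∈ p ⁻¹' {x'}, g y ∈ (extChartAt MJ w).source) :
    ∀ y ∈ p ⁻¹' {x'}, ∀ y' ∈ p ⁻¹' {x'}, g y = g y' := by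
  classical
  set e := extChartAt MJ w with he
  set h : Y → Ed := fun y' => e (g y') with hh
  have hcont : ContinuousOn h (p ⁻¹' {x'}) :=
    (continuousOn_extChartAt w).comp (hg.continuous.continuousOn) hgK
  obtain ⟨y₀, hy₀K, hmax⟩ := hK.exists_isMaxOn hKne hcont.norm
  haveI : PreconnectedSpace ↥(p ⁻¹' {x'}) := Subtype.preconnectedSpace hKconn
  set C : Set ↥(p ⁻¹' {x'}) := {y' | h ↑y' = h y₀} with hC
  have hCclosed : IsClosed C := by
    apply isClosed_eq
    · exact hcont.restrict
    · exact continuous_const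
  have hCopen : IsOpen C := by
    rw [isOpen_iff_forall_mem_open]
    rintro ⟨y', hy'K⟩ hy'C
    have hpy' : p y' = x' := hy'K
    simp only [hC, mem_setOf_eq] at hy'C
    obtain ⟨U, r, Ψ, hUopen, hpyU, hr, hproj, hΨ0, hΨcont, hΨmdiff, hΨsect, hcover⟩ :=
      fibered_chart p hp y' (hp_subm y')
    rw [hpy'] at hpyU hΨ0 hcover
    obtain ⟨V', hV'open, hyV', hVsub⟩ := hcover r hr le_rfl
    -- the composition in the fiber chart
    set q : ↥(mker (k := k) (d := d) p y') → Ed := fun z => h (Ψ x' z) with hq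
    have hΨfib : ∀ z ∈ ball (0 : ↥(mker (k := k) (d := d) p y')) r, Ψ x' z ∈ p ⁻¹' {x'} := by
      intro z hz
      simp only [mem_preimage, mem_singleton_iff]
      exact hproj x' hpyU z hz
    have hqd : DifferentiableOn ℂ q (ball 0 r) := by
      rw [← mdifferentiableOn_iff_differentiableOn]
      have h1 : MDifferentiableOn 𝓘(ℂ, ↥(mker (k := k) (d := d) p y')) MJ
          (fun z => g (Ψ x' z)) (ball 0 r) :=
        (hg.mdifferentiableOn (s := univ)).comp (hΨmdiff x' hpyU) (fun z _ => mem_univ _)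
      have h2 : MDifferentiableOn MJ 𝓘(ℂ, Ed) e (chartAt Ed w).source :=
        mdifferentiableOn_extChartAt
      refine h2.comp h1 ?_
      intro z hz
      rw [← extChartAt_source (I := MJ), ← he]
      exact hgK _ (hΨfib z hz)
    have hq0 : q 0 = h y' := by rw [hq]; simp [hΨ0]
    have hmax' : IsMaxOn (norm ∘ q) (ball 0 r) 0 := by
      intro z hz
      simp only [comp_apply, hq0, hy'C]
      exact hmax (hΨfib z hz)
    have heqon := Complex.eqOn_of_isPreconnected_of_isMaxOn_norm
      (convex_ball (0 : ↥(mker (k := k) (d := d) p y')) r).isPreconnected isOpen_ball hqd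
      (mem_ball_self hr) hmax'
    refine ⟨Subtype.val ⁻¹' V', ?_, hV'open.preimage continuous_subtype_val,
      by exact hyV'⟩
    rintro ⟨y'', hy''K⟩ hy''V
    simp only [mem_preimage] at hy''V
    obtain ⟨z, hzball, hzeq⟩ := hVsub ⟨hy''V, hy''K⟩
    have : h y'' = q z := by simp only [hq]; rw [hzeq]
    simp only [hC, mem_setOf_eq, this, heqon hzball, hq0, hy'C, const_apply]
  have hCuniv : C = univ := by
    apply (isClopen_iff.mp ⟨hCclosed, hCopen⟩).resolve_left
    intro hemp
    have : (⟨y₀, hy₀K⟩ : ↥(p ⁻¹' {x'})) ∈ C := rfl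
    rw [hemp] at this
    exact this
  have hhy : ∀ y ∈ p ⁻¹' {x'}, h y = h y₀ := by
    intro y hy
    have : (⟨y, hy⟩ : ↥(p ⁻¹' {x'})) ∈ C := by rw [hCuniv]; trivial
    exact this
  intro y hy y' hy'
  have h1 : h y = h y' := by rw [hhy y hy, hhy y' hy']
  exact e.injOn (hgK y hy) (hgK y' hy') h1

end

section Main

open Metric Set Function Filter
open scoped Manifold Topology

theorem holomorphic_map_of_fiber_spaces
    {k d : ℕ} {Y X : Type*} [TopologicalSpace Y] [TopologicalSpace X]
    [ChartedSpace (EuclideanSpace ℂ (Fin k)) Y]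
    [IsManifold 𝓘(ℂ, EuclideanSpace ℂ (Fin k)) (⊤ : ℕ∞) Y]
    [ChartedSpace (EuclideanSpace ℂ (Fin d)) X]
    [IsManifold 𝓘(ℂ, EuclideanSpace ℂ (Fin d)) (⊤ : ℕ∞) X]
    [ConnectedSpace X]
    (p : Y → X)
    (hp : MDifferentiable 𝓘(ℂ, EuclideanSpace ℂ (Fin k)) 𝓘(ℂ, EuclideanSpace ℂ (Fin d)) p)
    (hp_proper : IsProperMap p)
    (hp_surj : Function.Surjective p)
    -- `p` is a submersion
    (hp_subm : ∀ y : Y, Function.Surjective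
      (mfderiv 𝓘(ℂ, EuclideanSpace ℂ (Fin k)) 𝓘(ℂ, EuclideanSpace ℂ (Fin d)) p y))
    -- the fibers of `p` are connected
    (hp_fib : ∀ x : X, IsConnected (p ⁻¹' {x}))
    (F : Y → Y)
    (hF : MDifferentiable 𝓘(ℂ, EuclideanSpace ℂ (Fin k)) 𝓘(ℂ, EuclideanSpace ℂ (Fin k)) F)
    (a b : X) (hab : Set.MapsTo F (p ⁻¹' {a}) (p ⁻¹' {b})) :
    ∃ f : X → X,
      MDifferentiable 𝓘(ℂ, EuclideanSpace ℂ (Fin d)) 𝓘(ℂ, EuclideanSpace ℂ (Fin d)) f ∧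
      p ∘ F = f ∘ p := by
  classical
  set g : Y → X := fun y => p (F y) with hgdef
  have hg : MDifferentiable 𝓘(ℂ, EuclideanSpace ℂ (Fin k)) 𝓘(ℂ, EuclideanSpace ℂ (Fin d)) g :=
    hp.comp hF
  set S : Set X := {x | ∀ y ∈ p ⁻¹' {x}, ∀ y' ∈ p ⁻¹' {x}, g y = g y'} with hS
  -- `a ∈ S`
  have haS : a ∈ S := by
    intro y hy y' hy'
    have h1 : F y ∈ p ⁻¹' {b} := hab hy
    have h2 : F y' ∈ p ⁻¹' {b} := hab hy'
    simp only [mem_preimage, mem_singleton_iff] at h1 h2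
    rw [hgdef]
    simp only [h1, h2]
  -- `S` is open
  have hSopen : IsOpen S := by
    rw [isOpen_iff_forall_mem_open]
    intro x₀ hx₀
    obtain ⟨y₀, hy₀⟩ := (hp_fib x₀).nonempty
    set c : X := g y₀ with hc
    have hgfib : ∀ y ∈ p ⁻¹' {x₀}, g y = c := fun y hy => hx₀ y hy y₀ hy₀
    set O : Set Y := g ⁻¹' (extChartAt 𝓘(ℂ, EuclideanSpace ℂ (Fin d)) c).source with hO
    have hOopen : IsOpen O := (isOpen_extChartAt_source c).preimage hg.continuous
    have hfibO : p ⁻¹' {x₀} ⊆ O := by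
      intro y hy
      simp only [hO, mem_preimage, hgfib y hy]
      exact mem_extChartAt_source c
    obtain ⟨U₀, hU₀open, hx₀U₀, hU₀sub⟩ := proper_tube hp_proper hOopen hfibO
    refine ⟨U₀, ?_, hU₀open, hx₀U₀⟩
    intro x' hx'
    have hfibsub : ∀ y ∈ p ⁻¹' {x'},
        g y ∈ (extChartAt 𝓘(ℂ, EuclideanSpace ℂ (Fin d)) c).source := by
      intro y hy
      have : y ∈ p ⁻¹' U₀ := by
        simp only [mem_preimage]
        rw [show p y = x' from hy]
        exact hx'
      exact hU₀sub this
    exact const_on_fiber p hp hp_subm g hg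
      (hp_proper.isCompact_preimage isCompact_singleton) (hp_fib x').nonempty
      (hp_fib x').isPreconnected c hfibsub
  -- `S` is closed
  have hSclosed : IsClosed S := by
    rw [← closure_subset_iff_isClosed]
    intro x hxcl
    -- local constancy of `g` along the fiber at every point of the fiber over `x`
    have claim1 : ∀ y : Y, p y = x → ∃ Vy, IsOpen Vy ∧ y ∈ Vy ∧
        ∀ y'' ∈ Vy ∩ p ⁻¹' {x}, g y'' = g y := by
      intro y hxy
      obtain ⟨U, r, Ψ, hUopen, hpyU, hr, hproj, hΨ0, hΨcont, hΨmdiff, hΨsect, hcover⟩ :=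
        fibered_chart p hp y (hp_subm y)
      rw [hxy] at hpyU hΨ0 hcover
      set e := extChartAt 𝓘(ℂ, EuclideanSpace ℂ (Fin d)) (g y) with he
      have hgc : ContinuousOn (fun q : X × ↥(mker (k := k) (d := d) p y) => g (Ψ q.1 q.2))
          (U ×ˢ ball 0 r) := hg.continuous.comp_continuousOn hΨcont
      have hval : g (Ψ x 0) = g y := by rw [hΨ0]
      have hmem0 : ((x, 0) : X × ↥(mker (k := k) (d := d) p y)) ∈ U ×ˢ ball 0 r :=
        ⟨hpyU, mem_ball_self hr⟩
      have hpre : (fun q : X × ↥(mker (k := k) (d := d) p y) => g (Ψ q.1 q.2)) ⁻¹' e.source ∈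
          𝓝[U ×ˢ ball 0 r] ((x, 0) : X × ↥(mker (k := k) (d := d) p y)) := by
        apply (hgc _ hmem0).preimage_mem_nhdsWithin
        apply (isOpen_extChartAt_source (g y)).mem_nhds
        rw [hval]
        exact mem_extChartAt_source (g y)
      obtain ⟨O₂, hO₂open, hO₂mem, hO₂sub⟩ := mem_nhdsWithin.1 hpre
      set W := O₂ ∩ (U ×ˢ ball 0 r) with hW
      have hWopen : IsOpen W := hO₂open.inter (hUopen.prod isOpen_ball)
      have hWmem : ((x, 0) : X × ↥(mker (k := k) (d := d) p y)) ∈ W := ⟨hO₂mem, hmem0⟩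
      obtain ⟨u, v, huopen, hvopen, hxu, h0v, huv⟩ := isOpen_prod_iff.1 hWopen x 0 hWmem
      obtain ⟨r₁, hr₁, hr₁sub⟩ := Metric.isOpen_iff.1 hvopen 0 h0v
      set r'' := min r₁ r with hr''
      have hr''pos : 0 < r'' := lt_min hr₁ hr
      have hr''le : r'' ≤ r := min_le_right _ _
      set U' := u ∩ U with hU'
      have hU'open : IsOpen U' := huopen.inter hUopen
      have hxU' : x ∈ U' := ⟨hxu, hpyU⟩
      have hsubW : U' ×ˢ ball (0 : ↥(mker (k := k) (d := d) p y)) r'' ⊆ W := by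
        rintro ⟨x₁, z₁⟩ ⟨hx₁, hz₁⟩
        exact huv ⟨hx₁.1, hr₁sub (mem_ball.2 (lt_of_lt_of_le (mem_ball.1 hz₁) (min_le_left _ _)))⟩
      -- key : the chart representation is fiberwise constant at `x`
      have hkey : ∀ z ∈ ball (0 : ↥(mker (k := k) (d := d) p y)) r'', g (Ψ x z) = g y := by
        intro z hz
        have hmemz : ∀ x₁ ∈ U', ((x₁, z) : X × ↥(mker (k := k) (d := d) p y)) ∈ W :=
          fun x₁ hx₁ => hsubW ⟨hx₁, hz⟩
        have hmem0' : ∀ x₁ ∈ U', ((x₁, (0 : ↥(mker (k := k) (d := d) p y)))) ∈ W :=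
          fun x₁ hx₁ => hsubW ⟨hx₁, mem_ball_self hr''pos⟩
        have hWmem' : ∀ x₁ ∈ U', ∀ z₁ ∈ ball (0 : ↥(mker (k := k) (d := d) p y)) r'',
            ((x₁, z₁) : X × ↥(mker (k := k) (d := d) p y)) ∈ W :=
          fun x₁ hx₁ z₁ hz₁ => hsubW ⟨hx₁, hz₁⟩
        have hesrc : ∀ x₁ ∈ U', ∀ z₁ ∈ ball (0 : ↥(mker (k := k) (d := d) p y)) r'',
            g (Ψ x₁ z₁) ∈ e.source := by
          intro x₁ hx₁ z₁ hz₁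
          exact hO₂sub (hWmem' x₁ hx₁ z₁ hz₁)
        have hρcont : ∀ z₁ ∈ ball (0 : ↥(mker (k := k) (d := d) p y)) r'',
            ContinuousOn (fun x₁ => e (g (Ψ x₁ z₁))) U' := by
          intro z₁ hz₁
          have hinner : ContinuousOn (fun x₁ : X => g (Ψ x₁ z₁)) U' := by
            refine hgc.comp ((continuous_id.prodMk continuous_const).continuousOn) ?_
            intro x₁ hx₁
            exact (hWmem' x₁ hx₁ z₁ hz₁).2
          exact (continuousOn_extChartAt (g y)).comp hinner (fun x₁ hx₁ => hesrc x₁ hx₁ z₁ hz₁)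
        have h0ball : (0 : ↥(mker (k := k) (d := d) p y)) ∈ ball (0 : ↥(mker (k := k) (d := d) p y)) r'' :=
          mem_ball_self hr''pos
        have heqS : ∀ x₁ ∈ U' ∩ S, e (g (Ψ x₁ z)) = e (g (Ψ x₁ 0)) := by
          intro x₁ hx₁
          have hz' : z ∈ ball (0 : ↥(mker (k := k) (d := d) p y)) r :=
            lt_of_lt_of_le hz (by simpa [dist_eq_norm] using hr''le)
          have hm1 : Ψ x₁ z ∈ p ⁻¹' {x₁} := by
            simp only [mem_preimage, mem_singleton_iff]
            exact hproj x₁ hx₁.1.2 z hz'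
          have hm0 : Ψ x₁ 0 ∈ p ⁻¹' {x₁} := by
            simp only [mem_preimage, mem_singleton_iff]
            exact hproj x₁ hx₁.1.2 0 (mem_ball_self hr)
          have := hx₁.2 _ hm1 _ hm0
          rw [this]
        have hclos : x ∈ closure (U' ∩ S) :=
          hU'open.inter_closure ⟨hxU', hxcl⟩
        haveI : (𝓝[U' ∩ S] x).NeBot := mem_closure_iff_nhdsWithin_neBot.1 hclos
        have t₁ : Tendsto (fun x₁ => e (g (Ψ x₁ z))) (𝓝[U' ∩ S] x)
            (𝓝 (e (g (Ψ x z)))) :=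
          ((hρcont z hz) x hxU').mono inter_subset_left
        have t₀ : Tendsto (fun x₁ => e (g (Ψ x₁ 0))) (𝓝[U' ∩ S] x)
            (𝓝 (e (g (Ψ x 0)))) :=
          ((hρcont 0 h0ball) x hxU').mono inter_subset_left
        have hev : (fun x₁ => e (g (Ψ x₁ z))) =ᶠ[𝓝[U' ∩ S] x]
            (fun x₁ => e (g (Ψ x₁ 0))) := by
          filter_upwards [self_mem_nhdsWithin] with x₁ hx₁
          exact heqS x₁ hx₁
        have heqx : e (g (Ψ x z)) = e (g (Ψ x 0)) :=
          tendsto_nhds_unique_of_eventuallyEq t₁ t₀ hev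
        have := e.injOn (hesrc x hxU' z hz) (hesrc x hxU' 0 h0ball) heqx
        rw [this, hval]
      obtain ⟨V'', hV''open, hyV'', hV''sub⟩ := hcover r'' hr''pos hr''le
      refine ⟨V'', hV''open, hyV'', ?_⟩
      rintro y'' ⟨hy''V, hy''fib⟩
      obtain ⟨z, hzball, hzeq⟩ := hV''sub ⟨hy''V, hy''fib⟩
      rw [← hzeq]
      exact hkey z hzball
    -- conclude `x ∈ S` from local constancy and connectedness of the fiber
    obtain ⟨y₀, hy₀⟩ := (hp_fib x).nonempty
    haveI : PreconnectedSpace ↥(p ⁻¹' {x}) :=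
      Subtype.preconnectedSpace (hp_fib x).isPreconnected
    set C : Set ↥(p ⁻¹' {x}) := {y' | g ↑y' = g y₀} with hC
    have hCopen : IsOpen C := by
      rw [isOpen_iff_forall_mem_open]
      rintro ⟨y', hy'K⟩ hy'C
      obtain ⟨Vy, hVyopen, hyVy, hVyconst⟩ := claim1 y' hy'K
      refine ⟨Subtype.val ⁻¹' Vy, ?_, hVyopen.preimage continuous_subtype_val, by exact hyVy⟩
      rintro ⟨y'', hy''K⟩ hy''V
      simp only [mem_preimage] at hy''V
      have := hVyconst y'' ⟨hy''V, hy''K⟩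
      simp only [hC, mem_setOf_eq] at hy'C ⊢
      rw [this, hy'C]
    have hCcopen : IsOpen Cᶜ := by
      rw [isOpen_iff_forall_mem_open]
      rintro ⟨y', hy'K⟩ hy'C
      obtain ⟨Vy, hVyopen, hyVy, hVyconst⟩ := claim1 y' hy'K
      refine ⟨Subtype.val ⁻¹' Vy, ?_, hVyopen.preimage continuous_subtype_val, by exact hyVy⟩
      rintro ⟨y'', hy''K⟩ hy''V
      simp only [mem_preimage] at hy''V
      have := hVyconst y'' ⟨hy''V, hy''K⟩
      simp only [hC, mem_compl_iff, mem_setOf_eq] at hy'C ⊢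
      rw [this]
      exact hy'C
    have hCuniv : C = univ := by
      apply (isClopen_iff.mp ⟨⟨hCcopen⟩, hCopen⟩).resolve_left
      intro hemp
      have hmem : (⟨y₀, hy₀⟩ : ↥(p ⁻¹' {x})) ∈ C := rfl
      rw [hemp] at hmem
      exact hmem
    intro y hy y' hy'
    have h1 : (⟨y, hy⟩ : ↥(p ⁻¹' {x})) ∈ C := by rw [hCuniv]; trivial
    have h2 : (⟨y', hy'⟩ : ↥(p ⁻¹' {x})) ∈ C := by rw [hCuniv]; trivial
    simp only [hC, mem_setOf_eq] at h1 h2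
    rw [h1, h2]
  -- `S` is everything
  have hSuniv : S = univ :=
    (isClopen_iff.mp ⟨hSclosed, hSopen⟩).resolve_left (by
      intro hemp
      rw [hemp] at haS
      exact haS)
  -- construct `f`
  set f : X → X := fun x => g (surjInv hp_surj x) with hf
  have hfp : ∀ x : X, ∀ y ∈ p ⁻¹' {x}, f x = g y := by
    intro x y hy
    have hxS : x ∈ S := by rw [hSuniv]; trivial
    exact hxS _ (by simp [mem_preimage, surjInv_eq hp_surj x]) y hy
  have hcomm : p ∘ F = f ∘ p := by
    funext y
    exact (hfp (p y) y rfl).symm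
  refine ⟨f, ?_, hcomm⟩
  intro x
  set y : Y := surjInv hp_surj x with hy
  have hxy : p y = x := surjInv_eq hp_surj x
  obtain ⟨U, r, Ψ, hUopen, hpyU, hr, hproj, hΨ0, hΨcont, hΨmdiff, hΨsect, hcover⟩ :=
    fibered_chart p hp y (hp_subm y)
  rw [hxy] at hpyU
  have heq : ∀ x' ∈ U, f x' = g (Ψ x' 0) := by
    intro x' hx'
    exact hfp x' (Ψ x' 0) (by
      simp only [mem_preimage, mem_singleton_iff]
      exact hproj x' hx' 0 (mem_ball_self hr))
  have hgσ : MDifferentiableAt 𝓘(ℂ, EuclideanSpace ℂ (Fin d)) 𝓘(ℂ, EuclideanSpace ℂ (Fin d))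
      (fun x' => g (Ψ x' 0)) x := by
    have hσ := hΨsect.mdifferentiableAt (hUopen.mem_nhds hpyU)
    exact MDifferentiableAt.comp (g := g) x (hg (Ψ x 0)) hσ
  apply hgσ.congr_of_eventuallyEq
  filter_upwards [hUopen.mem_nhds hpyU] with x' hx'
  exact heq x' hx'


end Main

end Aux
end
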